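/- Let V be a finite set, let 𝓕₀ ⊆ 2^V, and let w be a non-empty finite word over V with ind(w) ≠ ∅. Then there exists a ⊆-maximal element F of 𝓕₀ such that ind(w) ⊆ F. -/

import Mathlib

/- Common definitions for finite-time Muller games, following
   McNaughton / Fearnley-Zimmermann. -/

universe u

variable {V : Type u}

/-- The occurrence set of a finite word: the set of letters occurring in it. -/
def occ (x : List V) : Set V := {v | v ∈ x}

/-- `score F w` is the maximal `k` such that some suffix of `w` decomposes as
`x₁ ⋯ x_k` with every `xᵢ` non-empty and `occ xᵢ = F` (with `max ∅ = 0`). -/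
noncomputable def score (F : Set V) (w : List V) : ℕ :=
  sSup {k | ∃ xs : List (List V), xs.length = k ∧
    (∀ x ∈ xs, x ≠ [] ∧ occ x = F) ∧ xs.flatten <:+ w}

/-- `maxscore 𝓕 w` is the maximum of `score F u` over `F ∈ 𝓕` and non-empty
prefixes `u` of `w`. -/
noncomputable def maxscore (𝓕 : Set (Set V)) (w : List V) : ℕ :=
  sSup {n | ∃ F ∈ 𝓕, ∃ u : List V, u ≠ [] ∧ u <+: w ∧ n = score F u}

/-- `AccGood F w x` : `x` is a suffix of `w` with `occ x ⊆ F` such that removing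
any suffix `y` of `x` from `w` does not change the score of `F`. -/
def AccGood (F : Set V) (w x : List V) : Prop :=
  x <:+ w ∧ occ x ⊆ F ∧
    ∀ y : List V, y <:+ x → score F (w.take (w.length - y.length)) = score F w

/-- The accumulator `acc F w` : the occurrence set of the longest suffix `x` of `w`
with `occ x ⊆ F` such that the score of `F` did not change during `x`. -/
noncomputable def acc (F : Set V) (w : List V) : Set V :=
  occ (w.drop (sInf {i | AccGood F w (w.drop i)}))

/-- A non-empty word `w` is an `𝓕`-burden if `maxscore 𝓕 w ≤ 2` and for every
`F ∈ 𝓕` either `score F w = 0`, or `score F w = 1` and `acc F w = ∅`. -/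
def Burden (𝓕 : Set (Set V)) (w : List V) : Prop :=
  w ≠ [] ∧ maxscore 𝓕 w ≤ 2 ∧
    ∀ F ∈ 𝓕, score F w = 0 ∨ (score F w = 1 ∧ acc F w = ∅)

/-- The maxscore of an infinite sequence: the supremum (in `ℕ∞`) of the scores of
sets `F ∈ 𝓕` over all non-empty finite prefixes. -/
noncomputable def maxscoreInf (𝓕 : Set (Set V)) (ρ : ℕ → V) : ℕ∞ :=
  ⨆ F ∈ 𝓕, ⨆ n : ℕ, (score F ((List.range (n + 1)).map ρ) : ℕ∞)

/-- The set of elements occurring infinitely often in the sequence `ρ`. -/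
def limitSet (ρ : ℕ → V) : Set V := {v | ∀ N : ℕ, ∃ n, N ≤ n ∧ ρ n = v}

/-- The indicator of a play: the union of all `F ∈ 𝓕` with positive score
together with all non-empty accumulators of members of `𝓕`. -/
noncomputable def ind (𝓕 : Set (Set V)) (w : List V) : Set V :=
  (⋃ F ∈ {F ∈ 𝓕 | 0 < score F w}, F) ∪ ⋃ F ∈ {F ∈ 𝓕 | acc F w ≠ ∅}, acc F w

/-- An arena: a finite directed graph together with the set `V0` of vertices of
Player 0 (Player 1 owns the complement), where every vertex has a successor. -/
structure Arena (V : Type u) where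
  V0 : Set V
  E : V → V → Prop
  exists_succ : ∀ v, ∃ u, E v u

/-- The positions of Player `i`. -/
def Arena.pos (G : Arena V) (i : Fin 2) : Set V :=
  if i = 0 then G.V0 else G.V0ᶜ

/-- A strategy maps a history (the play so far, excluding the current vertex)
and the current vertex to a successor vertex. -/
abbrev Strategy (V : Type u) := List V → V → V

/-- A strategy is legal if it always moves along edges. -/
def Arena.Legal (G : Arena V) (σ : Strategy V) : Prop :=
  ∀ w v, G.E v (σ w v)

/-- An infinite play in `G` starting in `v`. -/
def Arena.IsPlay (G : Arena V) (v : V) (ρ : ℕ → V) : Prop :=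
  ρ 0 = v ∧ ∀ n, G.E (ρ n) (ρ (n + 1))

/-- An infinite play is consistent with the strategy `σ` of Player `i`. -/
def Arena.ConsistentInf (G : Arena V) (i : Fin 2) (σ : Strategy V) (ρ : ℕ → V) : Prop :=
  ∀ n, ρ n ∈ G.pos i → ρ (n + 1) = σ ((List.range n).map ρ) (ρ n)

/-- Player `i` (with winning condition `𝓕i`) wins the Muller game from `v`. -/
def Arena.MullerWinFrom (G : Arena V) (i : Fin 2) (𝓕i : Set (Set V)) (v : V) : Prop :=
  ∃ σ : Strategy V, G.Legal σ ∧
    ∀ ρ : ℕ → V, G.IsPlay v ρ → G.ConsistentInf i σ ρ → limitSet ρ ∈ 𝓕i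

/-- The winning region of Player `i` in the Muller game. -/
def Arena.MullerWinRegion (G : Arena V) (i : Fin 2) (𝓕i : Set (Set V)) : Set V :=
  {v | G.MullerWinFrom i 𝓕i v}

/-- A finite play is consistent with the strategy `σ` of Player `i`. -/
def Arena.ConsistentFin (G : Arena V) (i : Fin 2) (σ : Strategy V) (w : List V) : Prop :=
  ∀ (u : List V) (v x : V), u ++ [v, x] <+: w → v ∈ G.pos i → x = σ u v

/-- A play of the finite-time Muller game with threshold `k`: a finite path
whose maxscore (over all subsets) is exactly `k`, while the maxscore of
its proper prefixes is `< k`. -/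
def FTPlay (G : Arena V) (k : ℕ) (w : List V) : Prop :=
  w.Chain' G.E ∧ maxscore (Set.univ : Set (Set V)) w = k ∧
    maxscore (Set.univ : Set (Set V)) w.dropLast < k

/-- Player `i` wins the finite-time Muller game with threshold `k` from `v`. -/
def FTWinFrom (G : Arena V) (i : Fin 2) (𝓕i : Set (Set V)) (k : ℕ) (v : V) : Prop :=
  ∃ σ : Strategy V, G.Legal σ ∧
    ∀ w : List V, FTPlay G k w → w.head? = some v → G.ConsistentFin i σ w →
      ∃ F ∈ 𝓕i, score F w = k

/-- The winning region of Player `i` in the finite-time Muller game. -/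
def FTWinRegion (G : Arena V) (i : Fin 2) (𝓕i : Set (Set V)) (k : ℕ) : Set V :=
  {v | FTWinFrom G i 𝓕i k v}

/-- A play of McNaughton's finite-time Muller game: a finite path such that some
set `F` reaches score `|F|! + 1`, while no set did so in a proper prefix. -/
def McNPlay (G : Arena V) (w : List V) : Prop :=
  w.Chain' G.E ∧ (∃ F : Set V, score F w = F.ncard.factorial + 1) ∧
    ∀ u : List V, u <+: w → u ≠ w →
      ∀ F : Set V, score F u ≠ F.ncard.factorial + 1

/-- Player `i` wins McNaughton's finite-time Muller game from `v`. -/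
def McNWinFrom (G : Arena V) (i : Fin 2) (𝓕i : Set (Set V)) (v : V) : Prop :=
  ∃ σ : Strategy V, G.Legal σ ∧
    ∀ w : List V, McNPlay G w → w.head? = some v → G.ConsistentFin i σ w →
      ∃ F ∈ 𝓕i, score F w = F.ncard.factorial + 1

/-- The winning region of Player `i` in McNaughton's finite-time Muller game. -/
def McNWinRegion (G : Arena V) (i : Fin 2) (𝓕i : Set (Set V)) : Set V :=
  {v | McNWinFrom G i 𝓕i v}

open Classical in
/-- The list `ρ₀ ⋯ ρₙ` of the first `n+1` vertices of the unique play that starts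
in `v` and is consistent with the strategy `σ` of Player `i` and the strategy `τ`
of the other player. -/
noncomputable def playList (G : Arena V) (i : Fin 2) (σ τ : Strategy V) (v : V) :
    ℕ → List V
  | 0 => [v]
  | n + 1 =>
      let w := playList G i σ τ v n
      let u := w.getLastD v
      w ++ [if u ∈ G.pos i then σ w.dropLast u else τ w.dropLast u]

/-- `playOf G i σ τ v` : the unique play starting in `v` that is consistent with
the strategy `σ` of Player `i` and the strategy `τ` of the other player. -/
noncomputable def playOf (G : Arena V) (i : Fin 2) (σ τ : Strategy V) (v : V)
    (n : ℕ) : V :=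
  (playList G i σ τ v n).getLastD v

lemma occ_drop_mono {V : Type u} (w : List V) {i j : ℕ} (h : i ≤ j) :
    occ (w.drop j) ⊆ occ (w.drop i) := by
  intro v hv
  have hsuf : w.drop j <:+ w.drop i := by
    have hd : w.drop j = (w.drop i).drop (j - i) := by
      rw [List.drop_drop]; congr 1; omega
    rw [hd]
    exact List.drop_suffix _ _
  exact hsuf.subset hv

lemma len_le_flatten {V : Type u} :
    ∀ xs : List (List V), (∀ x ∈ xs, x ≠ []) → xs.length ≤ xs.flatten.length := by
  intro xs
  induction xs with
  | nil => simp
  | cons x xs ih =>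
      intro h
      have hx : x ≠ [] := h x (by simp)
      have hx' : 1 ≤ x.length := List.length_pos_iff.mpr hx
      have := ih (fun y hy => h y (by simp [hy]))
      simp only [List.flatten_cons, List.length_append, List.length_cons]
      omega

lemma score_pos_exists {V : Type u} {F : Set V} {w : List V} (h : 0 < score F w) :
    ∃ i, occ (w.drop i) = F := by
  set S := {k | ∃ xs : List (List V), xs.length = k ∧
    (∀ x ∈ xs, x ≠ [] ∧ occ x = F) ∧ xs.flatten <:+ w} with hS
  have hbdd : BddAbove S := by
    refine ⟨w.length, ?_⟩
    rintro k ⟨xs, rfl, hxs, hsuf⟩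
    exact le_trans (len_le_flatten xs (fun x hx => (hxs x hx).1)) hsuf.length_le
  have hne : S.Nonempty := by
    by_contra hcon
    rw [Set.not_nonempty_iff_eq_empty] at hcon
    have h0 : score F w = 0 := by
      rw [score, ← hS, hcon, csSup_empty]; rfl
    omega
  have hmem : score F w ∈ S := by
    rw [score, ← hS]
    exact Nat.sSup_mem hne hbdd
  obtain ⟨xs, hlen, hxs, hsuf⟩ := hmem
  have hxsne : xs ≠ [] := by
    intro hh; rw [hh] at hlen; simp at hlen; omega
  set x := xs.getLast hxsne with hx
  have hxsuf : x <:+ xs.flatten := by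
    conv_rhs => rw [← List.dropLast_append_getLast hxsne]
    rw [List.flatten_append]
    simp [← hx]
  have hxw : x <:+ w := hxsuf.trans hsuf
  obtain ⟨t, ht⟩ := hxw
  refine ⟨t.length, ?_⟩
  rw [← ht, List.drop_left]
  exact (hxs x (List.getLast_mem hxsne)).2

lemma acc_subset {V : Type u} (F : Set V) (w : List V) :
    AccGood F w (w.drop (sInf {i | AccGood F w (w.drop i)})) := by
  have hne : {i | AccGood F w (w.drop i)}.Nonempty := by
    refine ⟨w.length, ?_, ?_, ?_⟩
    · rw [List.drop_length]; exact List.nil_suffix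
    · rw [List.drop_length]; intro v hv; exact absurd hv (List.not_mem_nil (a := v))
    · rw [List.drop_length]
      intro y hy
      rw [List.suffix_nil.mp hy]
      simp
  exact Nat.sInf_mem hne

/-- If `ind(w) ≠ ∅`, then there exists a `⊆`-maximal element
`F` of `𝓕₀` such that `ind(w) ⊆ F`. -/
theorem stmt_13 {V : Type u} [Fintype V] (F0 : Set (Set V)) (w : List V)
    (hw : w ≠ []) (hind : ind F0 w ≠ ∅) :
    ∃ F ∈ F0, ind F0 w ⊆ F ∧ ∀ F' ∈ F0, F ⊆ F' → F' = F := by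
  classical
  set J := {i : ℕ | (∃ F ∈ F0, 0 < score F w ∧ occ (w.drop i) = F) ∨
    (∃ F ∈ F0, acc F w ≠ ∅ ∧ occ (w.drop i) = acc F w)} with hJ
  have hmem : ∀ v, v ∈ ind F0 w →
      (∃ F ∈ F0, 0 < score F w ∧ v ∈ F) ∨
      (∃ F ∈ F0, acc F w ≠ ∅ ∧ v ∈ acc F w) := by
    intro v hv
    rcases hv with hv | hv
    · simp only [Set.mem_iUnion, Set.mem_sep_iff, exists_prop] at hv
      obtain ⟨F, ⟨hF, hs⟩, hvF⟩ := hv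
      exact Or.inl ⟨F, hF, hs, hvF⟩
    · simp only [Set.mem_iUnion, Set.mem_sep_iff, exists_prop] at hv
      obtain ⟨F, ⟨hF, ha⟩, hvF⟩ := hv
      exact Or.inr ⟨F, hF, ha, hvF⟩
  have hJi : ∀ v ∈ ind F0 w, ∃ i ∈ J, v ∈ occ (w.drop i) := by
    intro v hv
    rcases hmem v hv with ⟨F, hF, hs, hvF⟩ | ⟨F, hF, ha, hvF⟩
    · obtain ⟨i, hi⟩ := score_pos_exists hs
      exact ⟨i, Or.inl ⟨F, hF, hs, hi⟩, hi ▸ hvF⟩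
    · exact ⟨sInf {i | AccGood F w (w.drop i)}, Or.inr ⟨F, hF, ha, rfl⟩, hvF⟩
  have hJne : J.Nonempty := by
    obtain ⟨v, hv⟩ := Set.nonempty_iff_ne_empty.mpr hind
    obtain ⟨i, hiJ, _⟩ := hJi v hv
    exact ⟨i, hiJ⟩
  set i0 := sInf J with hi0def
  have hi0 : i0 ∈ J := Nat.sInf_mem hJne
  have hindsub : ind F0 w ⊆ occ (w.drop i0) := by
    intro v hv
    obtain ⟨i, hiJ, hvi⟩ := hJi v hv
    exact occ_drop_mono w (Nat.sInf_le hiJ) hvi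
  have hF1 : ∃ F1 ∈ F0, ind F0 w ⊆ F1 := by
    rcases hi0 with ⟨F, hF, _, heq⟩ | ⟨F, hF, _, heq⟩
    · exact ⟨F, hF, heq ▸ hindsub⟩
    · refine ⟨F, hF, fun v hv => ?_⟩
      have hva : v ∈ acc F w := heq ▸ hindsub hv
      exact (acc_subset F w).2.1 hva
  obtain ⟨F1, hF1mem, hF1sub⟩ := hF1
  set 𝒢 := {G ∈ F0 | ind F0 w ⊆ G} with hGdef
  have hGfin : 𝒢.Finite := Set.toFinite 𝒢
  have hGne : 𝒢.Nonempty := ⟨F1, hF1mem, hF1sub⟩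
  obtain ⟨F, hFG, hmax⟩ := Set.Finite.exists_maximalFor id 𝒢 hGfin hGne
  refine ⟨F, hFG.1, hFG.2, fun F' hF' hsub => ?_⟩
  exact le_antisymm (hmax ⟨hF', hFG.2.trans hsub⟩ hsub) hsub
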